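/- If a rooted directed graph (Γ, v) has the unique simple path property and is quasilinear (its strong components are totally ordered in the accessibility order), then Γ is linear, i.e., its transition edges form a chain. -/

import Mathlib

structure DGraph : Type 1 where
  V : Type
  E : Type
  ι : E → V
  τ : E → V

namespace DGraph

/-- A directed path from `u` to `w` given by its list of edges. -/
inductive Path (G : DGraph) : G.V → G.V → List G.E → Prop
  | nil (v : G.V) : Path G v v []
  | cons (e : G.E) {w : G.V} {p : List G.E} :
      Path G (G.τ e) w p → Path G (G.ι e) w (e :: p)

/-- The list of vertices visited by a path `p` starting at `u`. -/
def verts (G : DGraph) (u : G.V) (p : List G.E) : List G.V :=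
  u :: p.map G.τ

/-- A simple directed path: a path visiting no vertex twice. -/
def SimplePath (G : DGraph) (u w : G.V) (p : List G.E) : Prop :=
  G.Path u w p ∧ (G.verts u p).Nodup

/-- `w` is reachable from `u` by a directed path. -/
def Reach (G : DGraph) (u w : G.V) : Prop := ∃ p, G.Path u w p

/-- A graph is rooted at `v` if every vertex is reachable from `v`. -/
def Rooted (G : DGraph) (v : G.V) : Prop := ∀ w, G.Reach v w

end DGraph


namespace DGraph

/-- A transition edge: an edge between distinct strong components, i.e. one
whose initial vertex is not reachable from its terminal vertex. -/
def Transition (G : DGraph) (e : G.E) : Prop := ¬ G.Reach (G.τ e) (G.ι e)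

lemma Path.append' {G : DGraph} : ∀ {u x w : G.V} {p q : List G.E},
    G.Path u x p → G.Path x w q → G.Path u w (p ++ q) := by
  intro u x w p q h1
  induction h1 with
  | nil v => intro h2; simpa using h2
  | cons e h ih => intro h2; exact Path.cons e (ih h2)

lemma verts_append (G : DGraph) (u : G.V) (p q : List G.E) :
    G.verts u (p ++ q) = G.verts u p ++ q.map G.τ := by
  simp [verts]

lemma path_split {G : DGraph} : ∀ {u w : G.V} {p : List G.E}, G.Path u w p →
    ∀ {x : G.V}, x ∈ G.verts u p →
    ∃ p₁ p₂, p = p₁ ++ p₂ ∧ G.Path u x p₁ ∧ G.Path x w p₂ := by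
  intro u w p h
  induction h with
  | nil v =>
      intro x hx
      simp [verts] at hx
      subst hx
      exact ⟨[], [], rfl, .nil _, .nil _⟩
  | cons e h ih =>
      rename_i w' p'
      intro x hx
      have hx' : x = G.ι e ∨ x ∈ G.verts (G.τ e) p' := by
        simpa [verts] using hx
      rcases hx' with rfl | hx'
      · exact ⟨[], e :: p', rfl, .nil _, .cons e h⟩
      · obtain ⟨p₁, p₂, rfl, h1, h2⟩ := ih hx'
        exact ⟨e :: p₁, p₂, rfl, .cons e h1, h2⟩

lemma reach_of_mem_verts {G : DGraph} {u w : G.V} {p : List G.E}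
    (h : G.Path u w p) {x : G.V} (hx : x ∈ G.verts u p) : G.Reach x w := by
  obtain ⟨p₁, p₂, rfl, h1, h2⟩ := path_split h hx
  exact ⟨p₂, h2⟩

lemma reach_of_edge_mem {G : DGraph} : ∀ {u w : G.V} {p : List G.E},
    G.Path u w p → ∀ {g : G.E}, g ∈ p → G.Reach (G.τ g) w := by
  intro u w p h
  induction h with
  | nil v => intro g hg; simp at hg
  | cons e h ih =>
      intro g hg
      rcases List.mem_cons.mp hg with rfl | hg
      · exact ⟨_, h⟩
      · exact ih hg

section USPP

variable {G : DGraph} {v : G.V} (P : G.V → List G.E)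
  (hS : ∀ w, G.SimplePath v w (P w))
  (hU : ∀ w, ∀ q, G.SimplePath v w q → q = P w)

include hS hU

lemma usp_prefix {x : G.V} {u : G.V} (hx : x ∈ G.verts v (P u)) :
    ∃ p₂, P u = P x ++ p₂ := by
  obtain ⟨p₁, p₂, heq, h1, h2⟩ := path_split (hS u).1 hx
  have hnd : (G.verts v p₁).Nodup := by
    have := (hS u).2
    rw [heq, verts_append] at this
    exact (List.nodup_append.mp this).1
  have : p₁ = P x := hU x p₁ ⟨h1, hnd⟩
  exact ⟨p₂, by rw [heq, this]⟩

lemma tree_or_back (h : G.E) :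
    (G.τ h) ∈ G.verts v (P (G.ι h)) ∨ P (G.τ h) = P (G.ι h) ++ [h] := by
  by_cases hmem : (G.τ h) ∈ G.verts v (P (G.ι h))
  · exact Or.inl hmem
  · right
    have hpath : G.Path v (G.τ h) (P (G.ι h) ++ [h]) :=
      Path.append' (hS _).1 (.cons h (.nil _))
    have hnd : (G.verts v (P (G.ι h) ++ [h])).Nodup := by
      rw [verts_append]
      refine List.nodup_append'.mpr ⟨(hS _).2, by simp, ?_⟩
      intro a ha hb
      simp at hb
      subst hb
      exact hmem ha
    exact (hU _ _ ⟨hpath, hnd⟩).symm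

lemma usp_tree_edge {h : G.E} (ht : G.Transition h) :
    P (G.τ h) = P (G.ι h) ++ [h] := by
  rcases tree_or_back P hS hU h with hmem | heq
  · exact absurd (reach_of_mem_verts (hS _).1 hmem) ht
  · exact heq

lemma keyM : ∀ {u w : G.V} {t : List G.E}, G.Path u w t →
    ∀ g, g ∈ P w → g ∈ P u ∨ G.Reach u (G.ι g) := by
  intro u w t ht
  induction ht with
  | nil x => intro g hg; exact Or.inl hg
  | cons h hp ih =>
      intro g hg
      rcases ih g hg with hg' | hr
      · rcases tree_or_back P hS hU h with hmem | heq
        · obtain ⟨p₂, hpre⟩ := usp_prefix P hS hU hmem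
          exact Or.inl (by rw [hpre]; exact List.mem_append_left _ hg')
        · rw [heq] at hg'
          rcases List.mem_append.mp hg' with h1 | h1
          · exact Or.inl h1
          · simp at h1
            subst h1
            exact Or.inr ⟨[], .nil _⟩
      · obtain ⟨r, hrp⟩ := hr
        exact Or.inr ⟨h :: r, .cons h hrp⟩

end USPP

/-- If a rooted directed graph `(Γ, v)` has the unique simple path property
and is quasilinear (any two vertices are comparable in the accessibility
preorder, i.e. its strong components are totally ordered), then `Γ` is
linear: its transition edges form a chain. -/
theorem quasilinear_uspp_implies_linear (G : DGraph) (v : G.V)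
    (hroot : G.Rooted v)
    (huspp : ∀ w : G.V, ∃! p : List G.E, G.SimplePath v w p)
    (hquasi : ∀ u w : G.V, G.Reach u w ∨ G.Reach w u) :
    ∀ e f : G.E, G.Transition e → G.Transition f →
      e = f ∨ G.Reach (G.τ e) (G.ι f) ∨ G.Reach (G.τ f) (G.ι e) := by
  classical
  choose P hP using huspp
  have hS : ∀ w, G.SimplePath v w (P w) := fun w => (hP w).1
  have hU : ∀ w, ∀ q, G.SimplePath v w q → q = P w := fun w q hq => (hP w).2 q hq
  intro e f he hf
  have treeE : P (G.τ e) = P (G.ι e) ++ [e] := usp_tree_edge P hS hU he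
  have treeF : P (G.τ f) = P (G.ι f) ++ [f] := usp_tree_edge P hS hU hf
  rcases hquasi (G.τ e) (G.τ f) with hef | hfe
  · obtain ⟨t, ht⟩ := hef
    have hfin : f ∈ P (G.τ f) := by rw [treeF]; simp
    rcases keyM P hS hU ht f hfin with hmem | hr
    · rw [treeE] at hmem
      rcases List.mem_append.mp hmem with hmem | hmem
      · exact Or.inr (Or.inr (reach_of_edge_mem (hS _).1 hmem))
      · simp at hmem
        exact Or.inl hmem.symm
    · exact Or.inr (Or.inl hr)
  · obtain ⟨t, ht⟩ := hfe
    have hein : e ∈ P (G.τ e) := by rw [treeE]; simp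
    rcases keyM P hS hU ht e hein with hmem | hr
    · rw [treeF] at hmem
      rcases List.mem_append.mp hmem with hmem | hmem
      · exact Or.inr (Or.inl (reach_of_edge_mem (hS _).1 hmem))
      · simp at hmem
        exact Or.inl hmem
    · exact Or.inr (Or.inr hr)

end DGraph
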